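/- Let Σ ∈ ℝ^{d×d} be symmetric positive definite and β ∈ ℝ^d, and for u ⊆ {1,…,d} define val(u) = βᵀΣβ − β_{−u}ᵀ(Σ_{−u,−u} − Σ_{−u,u}Σ_{uu}^{-1}Σ_{u,−u})β_{−u} (with val(∅) = 0 and val({1,…,d}) = βᵀΣβ); for Gaussian x ~ N(μ,Σ) this is Var(E[β₀ + βᵀx | x_u]). Then the Shapley value of player j equals φ_j = (1/d) Σ_{u ⊆ {1,…,d}\{j}} C(d−1,|u|)^{-1} ((Σ_{j,−u} − Σ_{j,u}Σ_{uu}^{-1}Σ_{u,−u})β_{−u})² / (Σ_{jj} − Σ_{j,u}Σ_{uu}^{-1}Σ_{u,j}). -/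

import Mathlib

open Finset Matrix

/-- The Shapley value of player `j` for the cooperative game `val` on subsets of `Fin d`. -/
noncomputable def shapley {d : ℕ} (val : Finset (Fin d) → ℝ) (j : Fin d) : ℝ :=
  (d : ℝ)⁻¹ * ∑ u ∈ (Finset.univ.erase j).powerset,
    ((Nat.choose (d - 1) u.card : ℝ))⁻¹ * (val (insert j u) - val u)

/-- The submatrix of `A` with rows indexed by `s` and columns indexed by `t`. -/
def subm {d : ℕ} (A : Matrix (Fin d) (Fin d) ℝ) (s t : Finset (Fin d)) :
    Matrix s t ℝ :=
  A.submatrix (fun i => (i : Fin d)) (fun k => (k : Fin d))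

/-- The Schur complement `Σ_{-w,-w} - Σ_{-w,w} Σ_{w,w}⁻¹ Σ_{w,-w}`, i.e. the conditional
covariance matrix of `x_{-w}` given `x_w` for a Gaussian vector with covariance `A`. -/
noncomputable def schurCompl {d : ℕ} (A : Matrix (Fin d) (Fin d) ℝ)
    (w : Finset (Fin d)) : Matrix (wᶜ : Finset (Fin d)) (wᶜ : Finset (Fin d)) ℝ :=
  subm A wᶜ wᶜ - subm A wᶜ w * (subm A w w)⁻¹ * subm A w wᶜ

/-- The row vector of conditional covariances of `x_j` with `x_{-u}` given `x_u`:
`Σ_{j,-u} - Σ_{j,u} Σ_{u,u}⁻¹ Σ_{u,-u}`. -/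
noncomputable def condCovRow {d : ℕ} (A : Matrix (Fin d) (Fin d) ℝ)
    (u : Finset (Fin d)) (j : Fin d) : (uᶜ : Finset (Fin d)) → ℝ :=
  fun k => A j k - ∑ a : u, ∑ b : u, A j a * (subm A u u)⁻¹ a b * A b k

/-- The conditional variance of `x_j` given `x_u`: `Σ_{jj} - Σ_{j,u} Σ_{u,u}⁻¹ Σ_{u,j}`. -/
noncomputable def condVarGauss {d : ℕ} (A : Matrix (Fin d) (Fin d) ℝ)
    (u : Finset (Fin d)) (j : Fin d) : ℝ :=
  A j j - ∑ a : u, ∑ b : u, A j a * (subm A u u)⁻¹ a b * A b j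

/-- The restriction of the coefficient vector `β` to the index set `s`. -/
def restr {d : ℕ} (β : Fin d → ℝ) (s : Finset (Fin d)) : s → ℝ := fun i => β i

namespace Aux

variable {d : ℕ}

/-- Extend a vector on a subset by zero. -/
def extv (u : Finset (Fin d)) (x : u → ℝ) : Fin d → ℝ :=
  fun i => if h : i ∈ u then x ⟨i, h⟩ else 0

lemma extv_coe (u : Finset (Fin d)) (x : u → ℝ) (a : u) : extv u x ↑a = x a := by
  simp [extv]

lemma extv_not_mem (u : Finset (Fin d)) (x : u → ℝ) {i : Fin d} (h : i ∉ u) :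
    extv u x i = 0 := dif_neg h

lemma sum_subtype_eq (u : Finset (Fin d)) (f : Fin d → ℝ) (hf : ∀ i ∉ u, f i = 0) :
    ∑ i : u, f ↑i = ∑ i, f i := by
  rw [Finset.univ_eq_attach, Finset.sum_attach u f]
  exact Finset.sum_subset (Finset.subset_univ u) (fun i _ hi => hf i hi)

lemma subm_posDef {A : Matrix (Fin d) (Fin d) ℝ} (hA : A.PosDef) (u : Finset (Fin d)) :
    (subm A u u).PosDef := by
  refine Matrix.PosDef.of_dotProduct_mulVec_pos ?_ ?_
  · exact hA.1.submatrix _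
  · intro x hx
    have hx' : extv u x ≠ 0 := by
      obtain ⟨a, ha⟩ := Function.ne_iff.mp hx
      refine Function.ne_iff.mpr ⟨↑a, ?_⟩
      simpa [extv_coe] using ha
    have := hA.dotProduct_mulVec_pos hx'
    rw [star_trivial] at this ⊢
    convert this using 1
    have h1 : ∀ i : Fin d, (A *ᵥ extv u x) i = ∑ b : u, A i ↑b * x b := by
      intro i
      simp only [mulVec, dotProduct]
      rw [← sum_subtype_eq u (fun k => A i k * extv u x k)
        (fun k hk => by simp [extv_not_mem u x hk])]
      exact Finset.sum_congr rfl fun b _ => by rw [extv_coe]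
    simp only [dotProduct]
    rw [← sum_subtype_eq u (fun i => extv u x i * (A *ᵥ extv u x) i)
      (fun i hi => by simp [extv_not_mem u x hi])]
    refine Finset.sum_congr rfl fun a _ => ?_
    rw [extv_coe, h1]
    simp only [subm, mulVec, dotProduct, submatrix_apply, Finset.mul_sum]

end Aux

namespace Aux2
open Aux

variable {d : ℕ} (A : Matrix (Fin d) (Fin d) ℝ) (u : Finset (Fin d))

/-- The regression coefficients: the vector supported on `u` solving
`A_{uu} p_u = (A y)_u`. -/
noncomputable def proj (y : Fin d → ℝ) : Fin d → ℝ :=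
  extv u (fun a => ∑ b : u, (subm A u u)⁻¹ a b * (A *ᵥ y) ↑b)

/-- The residual `y - proj`. -/
noncomputable def resid (y : Fin d → ℝ) : Fin d → ℝ := y - proj A u y

/-- The conditional covariance kernel. -/
noncomputable def condG : Fin d → Fin d → ℝ :=
  fun i m => A i m - ∑ a : u, ∑ b : u, A i ↑a * (subm A u u)⁻¹ a b * A ↑b m

lemma resid_not_mem (y : Fin d → ℝ) {k : Fin d} (hk : k ∉ u) :
    resid A u y k = y k := by
  simp [resid, proj, extv_not_mem _ _ hk]

lemma mulVec_resid_apply (y : Fin d → ℝ) (i : Fin d) :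
    (A *ᵥ resid A u y) i = ∑ m, condG A u i m * y m := by
  have hproj_nm : ∀ m, m ∉ u → proj A u y m = 0 := fun m hm => extv_not_mem _ _ hm
  have hproj_coe : ∀ a : u, proj A u y ↑a = ∑ b : u, (subm A u u)⁻¹ a b * (A *ᵥ y) ↑b :=
    fun a => extv_coe _ _ a
  have hproj : (A *ᵥ proj A u y) i
      = ∑ m, (∑ a : u, ∑ b : u, A i ↑a * (subm A u u)⁻¹ a b * A ↑b m) * y m := by
    calc (A *ᵥ proj A u y) i = ∑ m, A i m * proj A u y m := by simp [mulVec, dotProduct]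
      _ = ∑ a : u, A i ↑a * proj A u y ↑a :=
          (sum_subtype_eq u _ (fun m hm => by
            show A i m * proj A u y m = 0
            rw [hproj_nm m hm, mul_zero])).symm
      _ = ∑ a : u, ∑ b : u, ∑ m, A i ↑a * (subm A u u)⁻¹ a b * A ↑b m * y m := by
          refine Finset.sum_congr rfl fun a _ => ?_
          rw [hproj_coe a, Finset.mul_sum]
          refine Finset.sum_congr rfl fun b _ => ?_
          simp only [mulVec, dotProduct, Finset.mul_sum]
          exact Finset.sum_congr rfl fun m _ => by ring
      _ = ∑ a : u, ∑ m, ∑ b : u, A i ↑a * (subm A u u)⁻¹ a b * A ↑b m * y m :=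
          Finset.sum_congr rfl fun a _ => Finset.sum_comm
      _ = ∑ m, ∑ a : u, ∑ b : u, A i ↑a * (subm A u u)⁻¹ a b * A ↑b m * y m :=
          Finset.sum_comm
      _ = ∑ m, (∑ a : u, ∑ b : u, A i ↑a * (subm A u u)⁻¹ a b * A ↑b m) * y m := by
          refine Finset.sum_congr rfl fun m _ => ?_
          rw [Finset.sum_mul]
          exact Finset.sum_congr rfl fun a _ => (Finset.sum_mul _ _ _).symm
  calc (A *ᵥ resid A u y) i
      = (A *ᵥ y) i - (A *ᵥ proj A u y) i := by simp [resid, Matrix.mulVec_sub]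
    _ = ∑ m, A i m * y m
        - ∑ m, (∑ a : u, ∑ b : u, A i ↑a * (subm A u u)⁻¹ a b * A ↑b m) * y m := by
        rw [hproj]
        simp [mulVec, dotProduct]
    _ = ∑ m, condG A u i m * y m := by
        rw [← Finset.sum_sub_distrib]
        exact Finset.sum_congr rfl fun m _ => by rw [condG, sub_mul]

lemma condG_mem (hA : A.PosDef) {a : Fin d} (ha : a ∈ u) (m : Fin d) :
    condG A u a m = 0 := by
  have hdet : IsUnit (subm A u u).det := (subm_posDef hA u).det_pos.ne'.isUnit
  have hinv : subm A u u * (subm A u u)⁻¹ = 1 := Matrix.mul_nonsing_inv _ hdet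
  simp only [condG]
  rw [sub_eq_zero]
  have : ∀ b : u, ∑ a' : u, A a ↑a' * (subm A u u)⁻¹ a' b
      = (1 : Matrix u u ℝ) ⟨a, ha⟩ b := by
    intro b
    rw [← hinv, Matrix.mul_apply]
    exact Finset.sum_congr rfl fun a' _ => by simp [subm]
  rw [Finset.sum_comm]
  calc A a m = ∑ b : u, (1 : Matrix u u ℝ) ⟨a, ha⟩ b * A ↑b m := by
        rw [Finset.sum_congr rfl (fun b _ => by rw [Matrix.one_apply])]
        simp
    _ = ∑ b : u, ∑ a' : u, A a ↑a' * (subm A u u)⁻¹ a' b * A ↑b m := by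
        refine Finset.sum_congr rfl fun b _ => ?_
        rw [← this b, Finset.sum_mul]

lemma mulVec_resid_mem (hA : A.PosDef) (y : Fin d → ℝ) {a : Fin d} (ha : a ∈ u) :
    (A *ᵥ resid A u y) a = 0 := by
  rw [mulVec_resid_apply]
  simp [condG_mem A u hA ha]

lemma vec_eq_zero (hA : A.PosDef) (v : Fin d → ℝ)
    (h1 : ∀ k, k ∉ u → v k = 0) (h2 : ∀ a ∈ u, (A *ᵥ v) a = 0) : v = 0 := by
  by_contra hv
  have hpos := hA.dotProduct_mulVec_pos hv
  rw [star_trivial] at hpos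
  have : v ⬝ᵥ (A *ᵥ v) = 0 := by
    simp only [dotProduct]
    refine Finset.sum_eq_zero fun k _ => ?_
    by_cases hk : k ∈ u
    · rw [h2 k hk, mul_zero]
    · rw [h1 k hk, zero_mul]
  rw [this] at hpos
  exact lt_irrefl _ hpos

lemma resid_congr (hA : A.PosDef) (y z : Fin d → ℝ)
    (h : ∀ k, k ∉ u → y k = z k) : resid A u y = resid A u z := by
  have := vec_eq_zero A u hA (resid A u y - resid A u z)
    (fun k hk => by rw [Pi.sub_apply, resid_not_mem A u y hk, resid_not_mem A u z hk,
      h k hk, sub_self])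
    (fun a ha => by rw [Matrix.mulVec_sub, Pi.sub_apply,
      mulVec_resid_mem A u hA y ha, mulVec_resid_mem A u hA z ha, sub_self])
  exact sub_eq_zero.mp this

end Aux2

namespace Aux3
open Aux Aux2

variable {d : ℕ} (A : Matrix (Fin d) (Fin d) ℝ) (u : Finset (Fin d)) (β : Fin d → ℝ)
  (j : Fin d)

lemma condVar_eq (hA : A.PosDef) :
    condVarGauss A u j = (A *ᵥ resid A u (Pi.single j 1)) j := by
  rw [mulVec_resid_apply]
  rw [Finset.sum_eq_single j (fun m _ hm => by simp [Pi.single_eq_of_ne hm])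
    (fun h => absurd (Finset.mem_univ j) h)]
  simp [condG, condVarGauss]

/-- `bar` : β zeroed out on `u`. -/
noncomputable def bar : Fin d → ℝ := extv uᶜ (restr β uᶜ)

lemma bar_not_mem {k : Fin d} (hk : k ∉ u) : bar u β k = β k := by
  have : k ∈ uᶜ := Finset.mem_compl.mpr hk
  rw [bar, extv, dif_pos this]
  rfl

lemma bar_mem {k : Fin d} (hk : k ∈ u) : bar u β k = 0 := by
  rw [bar, extv, dif_neg (by simpa using hk)]

lemma condCov_eq (hA : A.PosDef) :
    condCovRow A u j ⬝ᵥ restr β uᶜ = (A *ᵥ resid A u β) j := by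
  have hresid : resid A u (bar u β) = resid A u β :=
    resid_congr A u hA _ _ (fun k hk => bar_not_mem u β hk)
  rw [← hresid, mulVec_resid_apply]
  simp only [dotProduct]
  rw [← sum_subtype_eq uᶜ (fun m => condG A u j m * bar u β m)
    (fun m hm => by
      show condG A u j m * bar u β m = 0
      rw [bar_mem u β (by simpa using hm), mul_zero])]
  refine Finset.sum_congr rfl fun k _ => ?_
  have hk : (k : Fin d) ∉ u := Finset.mem_compl.mp k.2
  rw [bar_not_mem u β hk]
  rfl

lemma quad_eq (hA : A.PosDef) :
    restr β uᶜ ⬝ᵥ (schurCompl A u) *ᵥ restr β uᶜ = β ⬝ᵥ (A *ᵥ resid A u β) := by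
  have hresid : resid A u (bar u β) = resid A u β :=
    resid_congr A u hA _ _ (fun k hk => bar_not_mem u β hk)
  have hrow : ∀ k : (uᶜ : Finset (Fin d)), ((schurCompl A u) *ᵥ restr β uᶜ) k
      = (A *ᵥ resid A u β) ↑k := by
    intro k
    rw [← hresid, mulVec_resid_apply]
    simp only [mulVec, dotProduct]
    rw [← sum_subtype_eq uᶜ (fun m => condG A u ↑k m * bar u β m)
      (fun m hm => by
        show condG A u (↑k) m * bar u β m = 0
        rw [bar_mem u β (by simpa using hm), mul_zero])]
    refine Finset.sum_congr rfl fun l _ => ?_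
    have hl : (l : Fin d) ∉ u := Finset.mem_compl.mp l.2
    rw [bar_not_mem u β hl]
    congr 1
    -- schurCompl entry = condG
    simp only [schurCompl, condG, Matrix.sub_apply, subm, Matrix.submatrix_apply,
      Matrix.mul_apply]
    congr 1
    rw [Finset.sum_comm]
    refine Finset.sum_congr rfl fun a _ => ?_
    rw [Finset.sum_mul]
  have hdot : ∀ x1 x2 : Fin d → ℝ, (∀ k, k ∉ u → x1 k = x2 k) →
      x1 ⬝ᵥ (A *ᵥ resid A u β) = x2 ⬝ᵥ (A *ᵥ resid A u β) := by
    intro x1 x2 h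
    simp only [dotProduct]
    refine Finset.sum_congr rfl fun k _ => ?_
    by_cases hk : k ∈ u
    · rw [mulVec_resid_mem A u hA β hk, mul_zero, mul_zero]
    · rw [h k hk]
  calc restr β uᶜ ⬝ᵥ (schurCompl A u) *ᵥ restr β uᶜ
      = ∑ k : (uᶜ : Finset (Fin d)), β ↑k * (A *ᵥ resid A u β) ↑k := by
        simp only [dotProduct]
        exact Finset.sum_congr rfl fun k _ => by rw [hrow k]; rfl
    _ = ∑ k, bar u β k * (A *ᵥ resid A u β) k := by
        rw [← sum_subtype_eq uᶜ (fun k => bar u β k * (A *ᵥ resid A u β) k)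
          (fun k hk => by
          show bar u β k * (A *ᵥ resid A u β) k = 0
          rw [bar_mem u β (by simpa using hk), zero_mul])]
        refine Finset.sum_congr rfl fun k _ => ?_
        rw [bar_not_mem u β (Finset.mem_compl.mp k.2)]
    _ = β ⬝ᵥ (A *ᵥ resid A u β) :=
        hdot _ _ (fun k hk => bar_not_mem u β hk)

end Aux3

namespace Aux4
open Aux Aux2 Aux3

variable {d : ℕ} (A : Matrix (Fin d) (Fin d) ℝ) (u : Finset (Fin d)) (β : Fin d → ℝ)
  (j : Fin d)

lemma dot_resid_congr (hA : A.PosDef) (x1 x2 v : Fin d → ℝ)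
    (h : ∀ k, k ∉ u → x1 k = x2 k) :
    x1 ⬝ᵥ (A *ᵥ resid A u v) = x2 ⬝ᵥ (A *ᵥ resid A u v) := by
  simp only [dotProduct]
  refine Finset.sum_congr rfl fun k _ => ?_
  by_cases hk : k ∈ u
  · rw [mulVec_resid_mem A u hA v hk, mul_zero, mul_zero]
  · rw [h k hk]

lemma dot_sym (hA : A.PosDef) (x y : Fin d → ℝ) : x ⬝ᵥ (A *ᵥ y) = y ⬝ᵥ (A *ᵥ x) := by
  have hsym : ∀ i k, A i k = A k i := fun i k => by
    have := hA.1.apply k i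
    rwa [star_trivial] at this
  simp only [dotProduct, mulVec, Finset.mul_sum]
  rw [Finset.sum_comm]
  refine Finset.sum_congr rfl fun k _ => Finset.sum_congr rfl fun i _ => ?_
  rw [hsym i k]; ring

lemma qdot (hA : A.PosDef) (hj : j ∉ u) (v : Fin d → ℝ) :
    (resid A u (Pi.single j 1)) ⬝ᵥ (A *ᵥ resid A u v) = (A *ᵥ resid A u v) j := by
  simp only [dotProduct]
  rw [Finset.sum_eq_single j]
  · rw [resid_not_mem A u _ hj, Pi.single_eq_same, one_mul]
  · intro k _ hkj
    by_cases hk : k ∈ u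
    · rw [mulVec_resid_mem A u hA v hk, mul_zero]
    · rw [resid_not_mem A u _ hk, Pi.single_eq_of_ne hkj, zero_mul]
  · exact fun h => absurd (Finset.mem_univ j) h

lemma var_pos (hA : A.PosDef) (hj : j ∉ u) :
    0 < (A *ᵥ resid A u (Pi.single j 1)) j := by
  have hq1 : resid A u (Pi.single j 1) j = 1 := by
    rw [resid_not_mem A u _ hj, Pi.single_eq_same]
  have hne : resid A u (Pi.single j 1) ≠ 0 := by
    intro h
    rw [h] at hq1
    norm_num at hq1
  have := hA.dotProduct_mulVec_pos hne
  rw [star_trivial] at this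
  rwa [← qdot A u j hA hj (Pi.single j 1)]

lemma decomposition (hA : A.PosDef) (hj : j ∉ u) :
    resid A (insert j u) β = resid A u β
      - ((A *ᵥ resid A u β) j / (A *ᵥ resid A u (Pi.single j 1)) j)
        • resid A u (Pi.single j 1) := by
  set q := resid A u (Pi.single j 1) with hq
  set r := resid A u β with hr
  set c := (A *ᵥ r) j / (A *ᵥ q) j with hc
  have hvp : (A *ᵥ q) j ≠ 0 := (var_pos A u j hA hj).ne'
  have h0 := vec_eq_zero A (insert j u) hA (resid A (insert j u) β - (r - c • q))
    ?_ ?_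
  · exact sub_eq_zero.mp h0
  · intro k hk
    have hku : k ∉ u := fun h => hk (Finset.mem_insert_of_mem h)
    have hkj : k ≠ j := fun h => hk (h ▸ Finset.mem_insert_self j u)
    rw [Pi.sub_apply, resid_not_mem A _ _ hk, Pi.sub_apply, Pi.smul_apply, hr,
      resid_not_mem A u _ hku, hq, resid_not_mem A u _ hku, Pi.single_eq_of_ne hkj]
    simp
  · intro a ha
    rw [Matrix.mulVec_sub, Pi.sub_apply, mulVec_resid_mem A _ hA β ha,
      Matrix.mulVec_sub, Pi.sub_apply, Matrix.mulVec_smul, Pi.smul_apply]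
    rcases Finset.mem_insert.mp ha with rfl | hau
    · rw [hc]
      rw [smul_eq_mul, div_mul_cancel₀ _ hvp, sub_self, sub_zero]
    · rw [hr, mulVec_resid_mem A u hA β hau, hq,
        mulVec_resid_mem A u hA (Pi.single j 1) hau]
      simp
end Aux4

namespace Key
open Aux Aux2 Aux3 Aux4

lemma key {d : ℕ} (A : Matrix (Fin d) (Fin d) ℝ) (hA : A.PosDef) (β : Fin d → ℝ)
    (j : Fin d) (u : Finset (Fin d)) (hj : j ∉ u) :
    (β ⬝ᵥ A *ᵥ β
        - restr β (insert j u)ᶜ ⬝ᵥ (schurCompl A (insert j u)) *ᵥ restr β (insert j u)ᶜ)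
      - (β ⬝ᵥ A *ᵥ β - restr β uᶜ ⬝ᵥ (schurCompl A u) *ᵥ restr β uᶜ)
      = (condCovRow A u j ⬝ᵥ restr β uᶜ) ^ 2 / condVarGauss A u j := by
  rw [quad_eq A u β hA, quad_eq A (insert j u) β hA, condCov_eq A u β j hA,
    condVar_eq A u j hA, decomposition A u β j hA hj]
  set q := resid A u (Pi.single j 1) with hq
  set r := resid A u β with hr
  set X := (A *ᵥ r) j with hX
  set Y := (A *ᵥ q) j with hY
  have hvp : Y ≠ 0 := (var_pos A u j hA hj).ne'
  have hdotq : β ⬝ᵥ (A *ᵥ q) = X := by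
    rw [hq, dot_resid_congr A u hA β r (Pi.single j 1)
      (fun k hk => (resid_not_mem A u β hk).symm), dot_sym A hA, ← hq]
    exact qdot A u j hA hj β
  rw [Matrix.mulVec_sub, Matrix.mulVec_smul, dotProduct_sub, dotProduct_smul,
    smul_eq_mul, hdotq]
  field_simp
  ring

end Key

/-- Shapley effects for a linear function `β₀ + βᵀx` of a Gaussian vector `x ~ N(μ, Σ)`:
with `val u = Var(E[βᵀx ∣ x_u]) = βᵀΣβ - β_{-u}ᵀ(Σ_{-u,-u} - Σ_{-u,u}Σ_{uu}⁻¹Σ_{u,-u})β_{-u}`,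
the Shapley value of variable `j` is
`(1/d) ∑_{u ⊆ -{j}} C(d-1,|u|)⁻¹ Cov(x_j, x_{-u}ᵀβ_{-u} ∣ x_u)² / Var(x_j ∣ x_u)`. -/
theorem shapley_gaussian_linear {d : ℕ} (A : Matrix (Fin d) (Fin d) ℝ)
    (hA : A.PosDef) (β : Fin d → ℝ) (j : Fin d) :
    shapley (fun u =>
        β ⬝ᵥ A.mulVec β - restr β uᶜ ⬝ᵥ (schurCompl A u).mulVec (restr β uᶜ)) j
      = (d : ℝ)⁻¹ * ∑ u ∈ (Finset.univ.erase j).powerset,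
          ((Nat.choose (d - 1) u.card : ℝ))⁻¹ *
            ((condCovRow A u j ⬝ᵥ restr β uᶜ) ^ 2 / condVarGauss A u j) := by
  rw [shapley]
  congr 1
  refine Finset.sum_congr rfl fun u hu => ?_
  congr 1
  have hj : j ∉ u := fun hju =>
    (Finset.mem_erase.mp (Finset.mem_powerset.mp hu hju)).1 rfl
  exact Key.key A hA β j u hj
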